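/- Let W be an invertible circulant K×K row-stochastic matrix with first row w, and let λ₁,…,λ_K be its eigenvalues given by the discrete Fourier transform λ_k = Σ_{ℓ=1}^{K} w_ℓ · exp(−2πi(k−1)(ℓ−1)/K), so that λ₁ = 1 and all λ_k ≠ 0. Then φ(W) = 1 + Σ_{k=2}^{K} 1/|λ_k|². -/

import Mathlib

open Finset Filter Asymptotics

namespace RRStmt

def simplex (K : ℕ) : Set (Fin K → ℝ) :=
  {p | (∀ k, 0 ≤ p k) ∧ ∑ k, p k = 1}

def simplexBoundary (K : ℕ) : Set (Fin K → ℝ) :=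
  {p | p ∈ simplex K ∧ ∃ k, p k = 0}

/-- Kullback–Leibler divergence between two vectors on `Fin K`. -/
noncomputable def KL {K : ℕ} (u v : Fin K → ℝ) : ℝ :=
  ∑ k, u k * Real.log (u k / v k)

/-- Boundary information projection `D(∂ℙW ‖ pW)`. -/
noncomputable def Dbnd {K : ℕ} (p : Fin K → ℝ) (W : Matrix (Fin K) (Fin K) ℝ) : ℝ :=
  sInf ((fun r => KL (Matrix.vecMul r W) (Matrix.vecMul p W)) '' simplexBoundary K)

/-- Empirical distribution (type) of a sample sequence. -/
noncomputable def empDist {K n : ℕ} (y : Fin n → Fin K) : Fin K → ℝ :=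
  fun k => ((Finset.univ.filter fun i => y i = k).card : ℝ) / n

/-- Expectation of `g` under `n` i.i.d. samples with distribution `q`. -/
noncomputable def iidE {K : ℕ} (q : Fin K → ℝ) (n : ℕ) (g : (Fin n → Fin K) → ℝ) : ℝ :=
  ∑ y : Fin n → Fin K, (∏ i, q (y i)) * g y

open Classical in
/-- Probability of event `E` under `n` i.i.d. samples with distribution `q`. -/
noncomputable def iidP {K : ℕ} (q : Fin K → ℝ) (n : ℕ) (E : Set (Fin n → Fin K)) : ℝ :=
  ∑ y : Fin n → Fin K, if y ∈ E then ∏ i, q (y i) else 0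

def RowStochastic {K : ℕ} (W : Matrix (Fin K) (Fin K) ℝ) : Prop :=
  (∀ i j, 0 ≤ W i j) ∧ ∀ i, ∑ j, W i j = 1

def EpsPrivate {K : ℕ} (ε : ℝ) (W : Matrix (Fin K) (Fin K) ℝ) : Prop :=
  ∀ k k' l, W k l ≤ Real.exp ε * W k' l

def IsCirculant {K : ℕ} (W : Matrix (Fin K) (Fin K) ℝ) : Prop :=
  ∃ w : Fin K → ℝ, ∀ i j, W i j = w (j - i)

def IsPermMatrix {K : ℕ} (W : Matrix (Fin K) (Fin K) ℝ) : Prop :=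
  ∃ σ : Equiv.Perm (Fin K), ∀ i j, W i j = if σ i = j then 1 else 0

noncomputable def nu {K : ℕ} (p : Fin K → ℝ) (W : Matrix (Fin K) (Fin K) ℝ)
    (ρ : ℕ) (k : Fin K) : ℝ :=
  ∑ j, Matrix.vecMul p W j * (W⁻¹ j k) ^ ρ

noncomputable def Phi {K : ℕ} (W : Matrix (Fin K) (Fin K) ℝ) : Matrix (Fin K) (Fin K) ℝ :=
  W * Matrix.hadamard W⁻¹ W⁻¹

noncomputable def phiSum {K : ℕ} (W : Matrix (Fin K) (Fin K) ℝ) : ℝ :=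
  ∑ k, ∑ l, Phi W k l

noncomputable def stepMech (K : ℕ) (ε : ℝ) : Matrix (Fin K) (Fin K) ℝ :=
  Matrix.of fun i j => if i = j then Real.exp ε / (Real.exp ε + K - 1)
                       else 1 / (Real.exp ε + K - 1)



section Aux16

variable {K : ℕ} [NeZero K]

private lemma pow_mod_eq (ξ : ℂ) (hξ : ξ ^ K = 1) (n : ℕ) : ξ ^ (n % K) = ξ ^ n := by
  conv_rhs => rw [← Nat.div_add_mod n K]
  rw [pow_add, pow_mul, hξ, one_pow, one_mul]

private lemma pow_val_add (ξ : ℂ) (hξ : ξ ^ K = 1) (a b : Fin K) :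
    ξ ^ ((a + b : Fin K) : ℕ) = ξ ^ (a : ℕ) * ξ ^ (b : ℕ) := by
  rw [Fin.val_add, pow_mod_eq ξ hξ, pow_add]

private lemma circ_sum (a : Fin K → ℂ) (ξ : ℂ) (hξ : ξ ^ K = 1)
    (A : Matrix (Fin K) (Fin K) ℂ) (hA : ∀ i j, A i j = a (j - i)) (i : Fin K) :
    ∑ j, A i j * ξ ^ (j : ℕ) = (∑ m, a m * ξ ^ (m : ℕ)) * ξ ^ (i : ℕ) := by
  rw [Finset.sum_mul]
  refine (Fintype.sum_equiv (Equiv.addRight i) _ _ ?_).symm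
  intro m
  rw [hA]
  simp only [Equiv.coe_addRight]
  rw [add_sub_cancel_right, pow_val_add ξ hξ, mul_assoc]

private lemma geom_sum_fin {c : ℂ} (hc : c ^ K = 1) (hne : c ≠ 1) :
    ∑ k : Fin K, c ^ (k : ℕ) = 0 := by
  rw [Fin.sum_univ_eq_sum_range, geom_sum_eq hne, hc]
  simp

private lemma inv_circulant (W : Matrix (Fin K) (Fin K) ℝ)
    (hWinv : IsUnit W) (w : Fin K → ℝ) (hWc : ∀ i j, W i j = w (j - i)) :
    ∀ i j, W⁻¹ i j = W⁻¹ 0 (j - i) := by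
  have hdet : IsUnit W.det := (Matrix.isUnit_iff_isUnit_det W).mp hWinv
  have hinvmul : W⁻¹ * W = 1 := Matrix.nonsing_inv_mul W hdet
  have key : ∀ c : Fin K,
      W⁻¹ = W⁻¹.submatrix (Equiv.addRight c) (Equiv.addRight c) := by
    intro c
    have hWsub : W.submatrix (Equiv.addRight c) (Equiv.addRight c) = W := by
      ext i j
      simp only [Matrix.submatrix_apply, Equiv.coe_addRight]
      rw [hWc, hWc, add_sub_add_right_eq_sub]
    have h1 : (W⁻¹.submatrix (Equiv.addRight c) (Equiv.addRight c)) *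
        (W.submatrix (Equiv.addRight c) (Equiv.addRight c)) = 1 := by
      rw [Matrix.submatrix_mul_equiv, hinvmul, Matrix.submatrix_one_equiv]
    rw [hWsub] at h1
    exact Matrix.inv_eq_left_inv h1
  intro i j
  have := congrFun (congrFun (key (-i)) i) j
  simpa [sub_eq_add_neg] using this

end Aux16

/-- `φ(W)` in terms of the eigenvalues (DFT of the first row) of a
circulant mechanism. -/
theorem stmt_16 (K : ℕ) (hK : 2 ≤ K)
    (W : Matrix (Fin K) (Fin K) ℝ) (hW : RowStochastic W) (hWinv : IsUnit W)
    (w : Fin K → ℝ) (hWc : ∀ i j, W i j = w (j - i))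
    (lam : Fin K → ℂ)
    (hlam : ∀ k, lam k = ∑ l, (w l : ℂ) *
      Complex.exp (-2 * Real.pi * Complex.I * ((k : ℕ) : ℂ) * ((l : ℕ) : ℂ) / K))
    (hlam1 : ∀ k : Fin K, (k : ℕ) = 0 → lam k = 1)
    (hlamne : ∀ k, lam k ≠ 0) :
    phiSum W = 1 + ∑ k ∈ Finset.univ.filter (fun k : Fin K => (k : ℕ) ≠ 0),
      1 / ‖lam k‖ ^ 2 := by
  haveI : NeZero K := ⟨by omega⟩
  have hK0 : (0:ℕ) < K := by omega
  have hdet : IsUnit W.det := (Matrix.isUnit_iff_isUnit_det W).mp hWinv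
  -- the inverse is circulant
  set v : Fin K → ℝ := fun j => W⁻¹ 0 j with hv_def
  have hv : ∀ i j, W⁻¹ i j = v (j - i) := by
    intro i j; exact inv_circulant W hWinv w hWc i j
  set S : ℝ := ∑ m, v m ^ 2 with hS_def
  -- Step A : phiSum W = K * S
  have stepA : phiSum W = K * S := by
    unfold phiSum Phi
    have : ∀ k l : Fin K, (W * Matrix.hadamard W⁻¹ W⁻¹) k l
        = ∑ j, W k j * (W⁻¹ j l * W⁻¹ j l) := by
      intro k l
      simp [Matrix.mul_apply, Matrix.hadamard_apply]
    simp_rw [this]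
    have hrow : ∀ j : Fin K, ∑ l, W⁻¹ j l * W⁻¹ j l = S := by
      intro j
      rw [hS_def]
      refine (Fintype.sum_equiv (Equiv.addRight j) _ _ ?_).symm
      intro m
      simp only [Equiv.coe_addRight]
      rw [hv, add_sub_cancel_right, sq]
    calc ∑ k, ∑ l, ∑ j, W k j * (W⁻¹ j l * W⁻¹ j l)
        = ∑ k, ∑ j, W k j * (∑ l, W⁻¹ j l * W⁻¹ j l) := by
          refine Finset.sum_congr rfl fun k _ => ?_
          rw [Finset.sum_comm]
          exact Finset.sum_congr rfl fun j _ => (Finset.mul_sum _ _ _).symm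
      _ = ∑ k : Fin K, S := by
          refine Finset.sum_congr rfl fun k _ => ?_
          simp_rw [hrow]
          rw [← Finset.sum_mul, hW.2 k, one_mul]
      _ = K * S := by simp [Finset.sum_const, nsmul_eq_mul, Finset.card_univ]
  -- complex setup
  set ζ : ℂ := Complex.exp (-2 * Real.pi * Complex.I / K) with hζ_def
  have hζK : ζ ^ K = 1 := by
    rw [hζ_def, ← Complex.exp_nat_mul]
    have hKne : (K:ℂ) ≠ 0 := Nat.cast_ne_zero.mpr (by omega)
    have : (K:ℂ) * (-2 * Real.pi * Complex.I / K) = -2 * Real.pi * Complex.I := by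
      field_simp
    rw [this]
    have : (-2 : ℂ) * Real.pi * Complex.I = -(2 * Real.pi * Complex.I) := by ring
    rw [this, Complex.exp_neg, Complex.exp_two_pi_mul_I, inv_one]
  have hprim : IsPrimitiveRoot ζ K := by
    have h := Complex.isPrimitiveRoot_exp K (by omega)
    have : ζ = (Complex.exp (2 * Real.pi * Complex.I / K))⁻¹ := by
      rw [hζ_def, ← Complex.exp_neg]
      ring_nf
    rw [this]
    exact h.inv
  have hξK : ∀ k : Fin K, (ζ ^ (k:ℕ)) ^ K = 1 := by
    intro k
    rw [← pow_mul, mul_comm, pow_mul, hζK, one_pow]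
  -- eigenvalues: lam k = ∑ l, w l * (ζ^k)^l
  have hlam' : ∀ k : Fin K, lam k = ∑ l, (w l : ℂ) * (ζ ^ (k:ℕ)) ^ (l:ℕ) := by
    intro k
    rw [hlam k]
    refine Finset.sum_congr rfl fun l _ => ?_
    congr 1
    rw [← pow_mul, hζ_def, ← Complex.exp_nat_mul]
    congr 1
    push_cast
    ring
  -- complexifications
  set Wc : Matrix (Fin K) (Fin K) ℂ := W.map Complex.ofReal with hWc_def
  set Vc : Matrix (Fin K) (Fin K) ℂ := W⁻¹.map Complex.ofReal with hVc_def
  have hWVc : Wc * Vc = 1 := by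
    have h := Matrix.mul_nonsing_inv W hdet
    ext i j
    have h2 : ∑ l, W i l * W⁻¹ l j = (1 : Matrix (Fin K) (Fin K) ℝ) i j := by
      rw [← Matrix.mul_apply, h]
    simp only [Matrix.mul_apply, hWc_def, hVc_def, Matrix.map_apply,
      ← Complex.ofReal_mul, ← Complex.ofReal_sum, h2]
    simp [Matrix.one_apply, apply_ite]
  have hWcc : ∀ i j, Wc i j = (fun m => ((w m : ℂ))) (j - i) := by
    intro i j; simp [hWc_def, Matrix.map_apply, hWc i j]
  have hVcc : ∀ i j, Vc i j = (fun m => ((v m : ℂ))) (j - i) := by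
    intro i j; simp [hVc_def, Matrix.map_apply, hv i j]
  set vhat : Fin K → ℂ := fun k => ∑ m, (v m : ℂ) * (ζ ^ (k:ℕ)) ^ (m:ℕ) with hvhat_def
  -- Step B : lam k * vhat k = 1
  have stepB : ∀ k, lam k * vhat k = 1 := by
    intro k
    have h1 : ∑ j, (Wc * Vc) 0 j * (ζ ^ (k:ℕ)) ^ (j:ℕ) = 1 := by
      rw [hWVc]
      simp [Matrix.one_apply]
    have h2 : ∑ j, (Wc * Vc) 0 j * (ζ ^ (k:ℕ)) ^ (j:ℕ)
        = lam k * vhat k := by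
      calc ∑ j, (Wc * Vc) 0 j * (ζ ^ (k:ℕ)) ^ (j:ℕ)
          = ∑ j, (∑ l, Wc 0 l * Vc l j) * (ζ ^ (k:ℕ)) ^ (j:ℕ) := by
            simp [Matrix.mul_apply]
        _ = ∑ l, Wc 0 l * (∑ j, Vc l j * (ζ ^ (k:ℕ)) ^ (j:ℕ)) := by
            simp_rw [Finset.sum_mul]
            rw [Finset.sum_comm]
            refine Finset.sum_congr rfl fun l _ => ?_
            rw [Finset.mul_sum]
            exact Finset.sum_congr rfl fun j _ => by ring
        _ = ∑ l, Wc 0 l * (vhat k * (ζ ^ (k:ℕ)) ^ (l:ℕ)) := by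
            refine Finset.sum_congr rfl fun l _ => ?_
            rw [circ_sum (fun m => ((v m : ℂ))) _ (hξK k) Vc hVcc l]
        _ = vhat k * ∑ l, Wc 0 l * (ζ ^ (k:ℕ)) ^ (l:ℕ) := by
            rw [Finset.mul_sum]
            exact Finset.sum_congr rfl fun l _ => by ring
        _ = vhat k * ((∑ m, (w m : ℂ) * (ζ ^ (k:ℕ)) ^ (m:ℕ)) * (ζ ^ (k:ℕ)) ^ ((0:Fin K):ℕ)) := by
            rw [circ_sum (fun m => ((w m : ℂ))) _ (hξK k) Wc hWcc 0]
        _ = lam k * vhat k := by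
            rw [hlam' k]
            simp [Fin.val_zero]
            ring
    rw [← h2, h1]
  -- star of ζ is ζ⁻¹
  have hstarζ : starRingEnd ℂ ζ = ζ⁻¹ := by
    rw [hζ_def, ← Complex.exp_conj, ← Complex.exp_neg]
    congr 1
    simp only [map_div₀, map_mul, map_neg, Complex.conj_I, Complex.conj_ofReal,
      map_ofNat, Complex.conj_natCast]
    ring
  -- Step C : ∑ k, Complex.normSq (vhat k) = K * S
  have stepC : ∑ k, (Complex.normSq (vhat k) : ℝ) = K * S := by
    have hC : ∑ k, ((Complex.normSq (vhat k) : ℂ)) = ((K : ℂ) * S) := by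
      have hterm : ∀ k : Fin K, (Complex.normSq (vhat k) : ℂ)
          = ∑ l, ∑ m, (v l : ℂ) * (v m : ℂ) * (ζ ^ (l:ℕ) * (ζ ^ (m:ℕ))⁻¹) ^ (k:ℕ) := by
        intro k
        rw [← Complex.mul_conj]
        rw [hvhat_def]
        simp only [map_sum, map_mul, Complex.conj_ofReal, map_pow, hstarζ]
        rw [Finset.sum_mul_sum]
        refine Finset.sum_congr rfl fun l _ => Finset.sum_congr rfl fun m _ => ?_
        have hζ0 : ζ ≠ 0 := hprim.ne_zero (by omega)
        field_simp
        ring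
      rw [Finset.sum_congr rfl fun k _ => hterm k]
      rw [Finset.sum_comm]
      have hinner : ∀ l : Fin K, ∑ k : Fin K, ∑ m : Fin K,
          (v l : ℂ) * (v m : ℂ) * (ζ ^ (l:ℕ) * (ζ ^ (m:ℕ))⁻¹) ^ (k:ℕ)
          = (v l : ℂ) * (v l : ℂ) * K := by
        intro l
        rw [Finset.sum_comm]
        rw [Finset.sum_eq_single l]
        · have hζ0 : ζ ≠ 0 := hprim.ne_zero (by omega)
          have hc1 : ζ ^ (l:ℕ) * (ζ ^ (l:ℕ))⁻¹ = 1 :=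
            mul_inv_cancel₀ (pow_ne_zero _ hζ0)
          rw [← Finset.mul_sum]
          simp [hc1, Finset.card_univ]
        · intro m _ hml
          have hcK : (ζ ^ (l:ℕ) * (ζ ^ (m:ℕ))⁻¹) ^ K = 1 := by
            rw [mul_pow, ← pow_mul, mul_comm (l:ℕ) K, pow_mul, hζK, one_pow,
              inv_pow, ← pow_mul, mul_comm (m:ℕ) K, pow_mul, hζK, one_pow, inv_one, mul_one]
          have hcne : ζ ^ (l:ℕ) * (ζ ^ (m:ℕ))⁻¹ ≠ 1 := by
            intro h
            have hζm : ζ ^ (m:ℕ) ≠ 0 := pow_ne_zero _ (hprim.ne_zero (by omega))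
            have : ζ ^ (l:ℕ) = ζ ^ (m:ℕ) := by
              rw [← div_eq_mul_inv] at h
              exact (div_eq_one_iff_eq hζm).mp h
            exact hml (Fin.ext (hprim.pow_inj l.isLt m.isLt this)).symm
          rw [← Finset.mul_sum, geom_sum_fin hcK hcne, mul_zero]
        · intro h
          exact absurd (Finset.mem_univ l) h
      rw [Finset.sum_congr rfl fun l _ => hinner l]
      rw [hS_def]
      push_cast
      rw [Finset.mul_sum]
      refine Finset.sum_congr rfl fun l _ => ?_
      ring
    have := hC
    rw [← Complex.ofReal_sum] at this
    · have h2 : ((∑ k, Complex.normSq (vhat k) : ℝ) : ℂ) = (((K : ℝ) * S : ℝ) : ℂ) := by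
        rw [this]; push_cast; ring
      exact_mod_cast h2
  -- Step D : normSq (vhat k) = 1 / abs (lam k) ^ 2
  have stepD : ∀ k, Complex.normSq (vhat k) = 1 / ‖lam k‖ ^ 2 := by
    intro k
    have h1 : vhat k = (lam k)⁻¹ :=
      eq_inv_of_mul_eq_one_left (by rw [mul_comm]; exact stepB k)
    rw [h1, Complex.normSq_eq_norm_sq, norm_inv, inv_pow, one_div]
  -- assemble
  have hsum : phiSum W = ∑ k : Fin K, 1 / ‖lam k‖ ^ 2 := by
    rw [stepA, ← stepC]
    exact Finset.sum_congr rfl fun k _ => stepD k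
  rw [hsum]
  have hsplit : ∑ k : Fin K, 1 / ‖lam k‖ ^ 2
      = (∑ k ∈ Finset.univ.filter (fun k : Fin K => (k:ℕ) = 0), 1 / ‖lam k‖ ^ 2)
        + ∑ k ∈ Finset.univ.filter (fun k : Fin K => (k:ℕ) ≠ 0), 1 / ‖lam k‖ ^ 2 :=
    (Finset.sum_filter_add_sum_filter_not _ _ _).symm
  rw [hsplit]
  congr 1
  have hfe : Finset.univ.filter (fun k : Fin K => (k:ℕ) = 0) = {(0 : Fin K)} := by
    ext k
    simp only [Finset.mem_filter, Finset.mem_univ, true_and, Finset.mem_singleton]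
    exact ⟨fun h => by ext; simpa using h, fun h => by subst h; simp⟩
  rw [hfe, Finset.sum_singleton, hlam1 0 rfl]
  simp

end RRStmt
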